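/- In the quaternion group Q8 = {±1, ±i, ±j, ±k}, for each choice of signs (ε_i, ε_j, ε_k) ∈ {−1,1}^3, the map φ sending ±x to ±x^{ε_x} for x ∈ {i,j,k} and fixing ±1 satisfies φ(gh) ∈ {φ(g)h, φ(g)h^{-1}} for all g, h ∈ Q8. These 8 maps form a group isomorphic to (Z/2Z)^3 and constitute exactly the stabilizer of 1 in Ξ_{Q8}. -/

import Mathlib

/-- The group `Ξ_G` of colour-preserving automorphisms of the complete Cayley graph. -/
def Xi (G : Type*) [Group G] : Subgroup (Equiv.Perm G) where
  carrier := {φ | ∀ g h : G, φ (g * h) = φ g * h ∨ φ (g * h) = φ g * h⁻¹}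
  one_mem' := fun _ _ => Or.inl rfl
  mul_mem' := by
    intro φ ψ hφ hψ g h
    simp only [Equiv.Perm.coe_mul, Function.comp_apply]
    rcases hψ g h with h1 | h1 <;> rw [h1]
    · exact hφ (ψ g) h
    · rcases hφ (ψ g) h⁻¹ with h2 | h2 <;> rw [h2] <;> simp [or_comm]
  inv_mem' := by
    intro φ hφ g h
    have key : φ (φ⁻¹ g * h) = g * h ∨ φ (φ⁻¹ g * h) = g * h⁻¹ := by
      simpa using hφ (φ⁻¹ g) h
    have key' : φ (φ⁻¹ g * h⁻¹) = g * h⁻¹ ∨ φ (φ⁻¹ g * h⁻¹) = g * h := by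
      rcases hφ (φ⁻¹ g) h⁻¹ with h2 | h2 <;> rw [h2] <;> simp
    rcases key with h1 | h1
    · left
      have := congrArg (φ⁻¹ : Equiv.Perm G) h1
      simpa using this.symm
    · rcases key' with h2 | h2
      · right
        have h3 : φ (φ⁻¹ g * h) = φ (φ⁻¹ g * h⁻¹) := by rw [h1, h2]
        have hh : h = h⁻¹ := mul_left_cancel (φ.injective h3)
        rw [← hh]
        have h1' : φ (φ⁻¹ g * h) = g * h := by rw [h1, ← hh]
        have := congrArg (φ⁻¹ : Equiv.Perm G) h1'
        simpa using this.symm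
      · right
        have := congrArg (φ⁻¹ : Equiv.Perm G) h2
        simpa using this.symm

/-- The stabilizer `ξ_G` of the identity in `Ξ_G`. -/
def XiStab (G : Type*) [Group G] : Subgroup (Equiv.Perm G) :=
  Xi G ⊓ MulAction.stabilizer (Equiv.Perm G) (1 : G)

/-- In `Q₈` (with `±1 = a 0, a 2`, `±i = a 1, a 3`, `±j = xa 0, xa 2`,
`±k = xa 1, xa 3`), the map fixing `±1` and inverting the pairs `±i`, `±j`, `±k`
according to the signs `e = (ε_i, ε_j, ε_k)` (where `true` stands for `ε = 1`). -/
def phiQ8fun (e : Bool × Bool × Bool) : QuaternionGroup 2 → QuaternionGroup 2 :=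
  fun g =>
    match g with
    | .a i => if i = 1 ∨ i = 3 then (if e.1 then .a i else (QuaternionGroup.a i)⁻¹) else .a i
    | .xa i => if i = 0 ∨ i = 2 then (if e.2.1 then .xa i else (QuaternionGroup.xa i)⁻¹)
        else (if e.2.2 then .xa i else (QuaternionGroup.xa i)⁻¹)

lemma phiQ8fun_involutive (e : Bool × Bool × Bool) : Function.Involutive (phiQ8fun e) := by
  obtain ⟨e1, e2, e3⟩ := e
  cases e1 <;> cases e2 <;> cases e3 <;> (intro x; revert x; decide)

/-- The permutation of `Q₈` associated to a choice of signs. -/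
def phiQ8 (e : Bool × Bool × Bool) : Equiv.Perm (QuaternionGroup 2) :=
  (phiQ8fun_involutive e).toPerm

open QuaternionGroup

lemma allcases' : ∀ g : QuaternionGroup 2, g = a 0 ∨ g = a 1 ∨ g = a 2 ∨ g = a 3 ∨
    g = xa 0 ∨ g = xa 1 ∨ g = xa 2 ∨ g = xa 3 := by decide

lemma part1' : ∀ e : Bool × Bool × Bool, phiQ8 e ∈ XiStab (QuaternionGroup 2) := by
  intro e
  constructor
  · show ∀ g h : QuaternionGroup 2, phiQ8 e (g * h) = phiQ8 e g * h ∨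
      phiQ8 e (g * h) = phiQ8 e g * h⁻¹
    obtain ⟨e1, e2, e3⟩ := e
    cases e1 <;> cases e2 <;> cases e3 <;> decide
  · show phiQ8 e • (1 : QuaternionGroup 2) = 1
    obtain ⟨e1, e2, e3⟩ := e
    cases e1 <;> cases e2 <;> cases e3 <;> decide

lemma part2' (φ : Equiv.Perm (QuaternionGroup 2)) (hφ : φ ∈ XiStab (QuaternionGroup 2)) :
    φ ∈ Set.range phiQ8 := by
  obtain ⟨hx, hs⟩ := hφ
  have h1 : φ 1 = 1 := hs
  have key : ∀ h : QuaternionGroup 2, φ h = h ∨ φ h = h⁻¹ := by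
    intro h
    have := hx 1 h
    rwa [one_mul, h1, one_mul, one_mul] at this
  have ka0 : φ (a 0) = a 0 := h1
  have ka2 : φ (a 2) = a 2 := by
    rcases key (a 2) with h | h
    · exact h
    · rw [h]; decide
  refine ⟨(decide (φ (a 1) = a 1), decide (φ (xa 0) = xa 0), decide (φ (xa 1) = xa 1)), ?_⟩
  ext g
  rcases allcases' g with hg|hg|hg|hg|hg|hg|hg|hg <;> subst hg <;>
    simp only [phiQ8, Function.Involutive.coe_toPerm, phiQ8fun]
  · rw [if_neg (by decide), ka0]
  · rw [if_pos (by decide)]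
    rcases key (a 1) with h | h <;> rw [h] <;> rfl
  · rw [if_neg (by decide), ka2]
  · rw [if_pos (by decide)]
    rcases key (a 1) with h | h <;> rcases key (a 3) with h' | h'
    · rw [h, h']; rfl
    · exact absurd (φ.injective ((h.trans (by decide)).trans h'.symm)) (by decide)
    · exact absurd (φ.injective ((h.trans (by decide)).trans h'.symm)) (by decide)
    · rw [h, h']; rfl
  · rw [if_pos (by decide)]
    rcases key (xa 0) with h | h <;> rw [h] <;> rfl
  · rw [if_neg (by decide)]
    rcases key (xa 1) with h | h <;> rw [h] <;> rfl
  · rw [if_pos (by decide)]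
    rcases key (xa 0) with h | h <;> rcases key (xa 2) with h' | h'
    · rw [h, h']; rfl
    · exact absurd (φ.injective ((h.trans (by decide)).trans h'.symm)) (by decide)
    · exact absurd (φ.injective ((h.trans (by decide)).trans h'.symm)) (by decide)
    · rw [h, h']; rfl
  · rw [if_neg (by decide)]
    rcases key (xa 1) with h | h <;> rcases key (xa 3) with h' | h'
    · rw [h, h']; rfl
    · exact absurd (φ.injective ((h.trans (by decide)).trans h'.symm)) (by decide)
    · exact absurd (φ.injective ((h.trans (by decide)).trans h'.symm)) (by decide)
    · rw [h, h']; rfl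

def bmap' (x : ZMod 2 × ZMod 2 × ZMod 2) : Bool × Bool × Bool :=
  (decide (x.1 = 0), decide (x.2.1 = 0), decide (x.2.2 = 0))

lemma map_mul_aux' : ∀ x y : ZMod 2 × ZMod 2 × ZMod 2,
    ∀ g : QuaternionGroup 2, phiQ8 (bmap' (x + y)) g = (phiQ8 (bmap' x) * phiQ8 (bmap' y)) g := by
  decide

def Fhom : Multiplicative (ZMod 2 × ZMod 2 × ZMod 2) →* Equiv.Perm (QuaternionGroup 2) where
  toFun := fun x => phiQ8 (bmap' (Multiplicative.toAdd x))
  map_one' := Equiv.ext fun g => by revert g; decide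
  map_mul' := fun x y => Equiv.ext fun g =>
    map_mul_aux' (Multiplicative.toAdd x) (Multiplicative.toAdd y) g

def rmap' (φ : Equiv.Perm (QuaternionGroup 2)) : ZMod 2 × ZMod 2 × ZMod 2 :=
  (if φ (a 1) = a 1 then 0 else 1, if φ (xa 0) = xa 0 then 0 else 1,
    if φ (xa 1) = xa 1 then 0 else 1)

lemma rmap_F' : ∀ x : ZMod 2 × ZMod 2 × ZMod 2, rmap' (phiQ8 (bmap' x)) = x := by decide

def binv' (e : Bool × Bool × Bool) : ZMod 2 × ZMod 2 × ZMod 2 :=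
  (if e.1 then 0 else 1, if e.2.1 then 0 else 1, if e.2.2 then 0 else 1)

lemma bmap_binv' : ∀ e : Bool × Bool × Bool, bmap' (binv' e) = e := by decide

def Fhom' : Multiplicative (ZMod 2 × ZMod 2 × ZMod 2) →* XiStab (QuaternionGroup 2) :=
  Fhom.codRestrict _ (fun x => part1' (bmap' (Multiplicative.toAdd x)))

lemma Fhom'_bij : Function.Bijective Fhom' := by
  constructor
  · intro x y h
    have h2 : Fhom x = Fhom y := congrArg Subtype.val h
    have h3 := congrArg rmap' h2
    exact Multiplicative.toAdd.injective (by simpa only [Fhom, MonoidHom.coe_mk, OneHom.coe_mk, rmap_F'] using h3)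
  · rintro ⟨φ, hφ⟩
    obtain ⟨e, he⟩ := part2' φ hφ
    refine ⟨Multiplicative.ofAdd (binv' e), ?_⟩
    apply Subtype.ext
    show Fhom (Multiplicative.ofAdd (binv' e)) = φ
    simp only [Fhom, MonoidHom.coe_mk, OneHom.coe_mk]
    rw [show Multiplicative.toAdd (Multiplicative.ofAdd (binv' e)) = binv' e from rfl, bmap_binv']
    exact he

/-- The eight maps `φ_{(ε_i, ε_j, ε_k)}` are colour-preserving, they are exactly the
stabilizer of `1` in `Ξ_{Q₈}`, and they form a group isomorphic to `(ℤ/2ℤ)³`. -/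
theorem xi_Q8 :
    (∀ e : Bool × Bool × Bool, phiQ8 e ∈ XiStab (QuaternionGroup 2)) ∧
    ((XiStab (QuaternionGroup 2) : Set (Equiv.Perm (QuaternionGroup 2)))
        = Set.range phiQ8) ∧
    Nonempty ((XiStab (QuaternionGroup 2)) ≃*
        Multiplicative (ZMod 2 × ZMod 2 × ZMod 2)) := by
  refine ⟨part1', ?_, ⟨(MulEquiv.ofBijective Fhom' Fhom'_bij).symm⟩⟩
  ext φ
  exact ⟨fun h => part2' φ h, fun ⟨e, he⟩ => he ▸ part1' e⟩
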